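/- With the hypotheses above (∂_k ∘ ∂_{k+1} = 0 between finite-dimensional inner product spaces), the kernel of the Laplacian L_k = ∂_{k+1}∂_{k+1}* + ∂_k*∂_k is linearly isomorphic to the homology H_k = ker(∂_k)/im(∂_{k+1}) (discrete Hodge theorem). -/

import Mathlib

set_option maxHeartbeats 1000000 in
/-- Discrete Hodge theorem: the kernel of the combinatorial Laplacian
`L_k = ∂_{k+1}∂_{k+1}* + ∂_k*∂_k` is linearly isomorphic to the homology
`H_k = ker(∂_k)/im(∂_{k+1})`. -/
theorem ker_laplacian_iso_homology
    {C2 C1 C0 : Type*}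
    [NormedAddCommGroup C2] [InnerProductSpace ℝ C2] [FiniteDimensional ℝ C2]
    [NormedAddCommGroup C1] [InnerProductSpace ℝ C1] [FiniteDimensional ℝ C1]
    [NormedAddCommGroup C0] [InnerProductSpace ℝ C0] [FiniteDimensional ℝ C0]
    (d2 : C2 →ₗ[ℝ] C1) (d1 : C1 →ₗ[ℝ] C0)
    (h : d1.comp d2 = 0) :
    Nonempty
      ((LinearMap.ker (d2 ∘ₗ LinearMap.adjoint d2 + LinearMap.adjoint d1 ∘ₗ d1)) ≃ₗ[ℝ]
        (LinearMap.ker d1 ⧸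
          (LinearMap.range d2).comap (LinearMap.ker d1).subtype)) := by
  have hle : LinearMap.range d2 ≤ LinearMap.ker d1 := by
    rintro x ⟨y, rfl⟩
    have : d1 (d2 y) = 0 := by
      have := congrFun (congrArg (fun f => f.toFun) h) y
      simpa using this
    simpa [LinearMap.mem_ker]
  -- ker L = (range d2)ᗮ ⊓ ker d1
  have hker : LinearMap.ker (d2 ∘ₗ LinearMap.adjoint d2 + LinearMap.adjoint d1 ∘ₗ d1)
      = (LinearMap.range d2)ᗮ ⊓ LinearMap.ker d1 := by
    ext x
    simp only [LinearMap.mem_ker, Submodule.mem_inf, LinearMap.add_apply, LinearMap.comp_apply]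
    constructor
    · intro hx
      have hinner : (inner ℝ (d2 (LinearMap.adjoint d2 x) + LinearMap.adjoint d1 (d1 x)) x : ℝ)
          = 0 := by rw [hx]; simp
      rw [inner_add_left] at hinner
      have h1 : (inner ℝ (d2 (LinearMap.adjoint d2 x)) x : ℝ)
          = ‖LinearMap.adjoint d2 x‖ ^ 2 := by
        rw [← LinearMap.adjoint_inner_right d2, ← real_inner_self_eq_norm_sq]
      have h2 : (inner ℝ (LinearMap.adjoint d1 (d1 x)) x : ℝ) = ‖d1 x‖ ^ 2 := by
        rw [LinearMap.adjoint_inner_left, ← real_inner_self_eq_norm_sq]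
      rw [h1, h2] at hinner
      have ha : LinearMap.adjoint d2 x = 0 := by
        have := add_eq_zero_iff_of_nonneg (by positivity) (by positivity) |>.mp hinner
        exact norm_eq_zero.mp (by nlinarith [this.1, norm_nonneg (LinearMap.adjoint d2 x)])
      have hb : d1 x = 0 := by
        have := add_eq_zero_iff_of_nonneg (by positivity) (by positivity) |>.mp hinner
        exact norm_eq_zero.mp (by nlinarith [this.2, norm_nonneg (d1 x)])
      refine ⟨?_, hb⟩
      rintro y ⟨z, rfl⟩
      rw [← LinearMap.adjoint_inner_right d2, ha, inner_zero_right]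
    · rintro ⟨hx1, hx2⟩
      have ha : LinearMap.adjoint d2 x = 0 := by
        apply ext_inner_right ℝ
        intro y
        rw [inner_zero_left, LinearMap.adjoint_inner_left, real_inner_comm]
        exact hx1 (d2 y) ⟨y, rfl⟩
      rw [ha, hx2]; simp
  -- dimension count
  have hdim : Module.finrank ℝ
      (LinearMap.ker (d2 ∘ₗ LinearMap.adjoint d2 + LinearMap.adjoint d1 ∘ₗ d1))
      = Module.finrank ℝ (LinearMap.ker d1 ⧸
          (LinearMap.range d2).comap (LinearMap.ker d1).subtype) := by
    rw [hker]
    have hsup : (LinearMap.range d2)ᗮ ⊔ LinearMap.ker d1 = ⊤ := by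
      rw [eq_top_iff, ← Submodule.sup_orthogonal_of_hasOrthogonalProjection (K := LinearMap.range d2)]
      exact sup_le (le_sup_of_le_right hle) le_sup_left
    have e1 := Submodule.finrank_sup_add_finrank_inf_eq
      ((LinearMap.range d2)ᗮ) (LinearMap.ker d1)
    rw [hsup, finrank_top] at e1
    have e2 := Submodule.finrank_quotient_add_finrank
      ((LinearMap.range d2).comap (LinearMap.ker d1).subtype)
    have e3 : Module.finrank ℝ ((LinearMap.range d2).comap (LinearMap.ker d1).subtype)
        = Module.finrank ℝ (LinearMap.range d2) :=
      (Submodule.comapSubtypeEquivOfLe hle).finrank_eq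
    have e4 := Submodule.finrank_add_finrank_orthogonal (K := LinearMap.range d2) (𝕜 := ℝ)
    omega
  exact ⟨LinearEquiv.ofFinrankEq _ _ hdim⟩
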